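/- For (λ₁,λ₂,λ₃,λ₄) ∈ ℝ⁴ and (μ₁,μ₂) ∈ ℝ², let Q_{λ,μ} be the 2×3 real matrix with rows (−(2/3)λ₂ + (1/2)μ₁, −(1/3)λ₃ + (1/2)μ₂, λ₁) and (−(2/3)λ₃ − (1/2)μ₂, −λ₄, (1/3)λ₂ + (1/2)μ₁). Then Q_{λ,μ} has rank at most 1 if and only if there exist (x₁,x₂) ∈ ℝ² and (y₁,y₂,y₃) ∈ ℝ³ such that λ₁ = x₁y₁, λ₂ = x₁y₂+x₂y₁, λ₃ = x₁y₃+x₂y₂, λ₄ = x₂y₃, μ₁ = (2/3)(2x₂y₁−x₁y₂) and μ₂ = (2/3)(x₂y₂−2x₁y₃). -/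

import Mathlib

open Submodule Module

lemma rank_le_one_iff_outer (A : Matrix (Fin 2) (Fin 3) ℝ) :
    A.rank ≤ 1 ↔ ∃ (u : Fin 2 → ℝ) (v : Fin 3 → ℝ), ∀ i j, A i j = u i * v j := by
  rw [Matrix.rank_eq_finrank_span_row]
  change finrank ℝ (span ℝ (Set.range A)) ≤ 1 ↔ _
  have hrange : Set.range A = {A 0, A 1} := by
    ext w; change (∃ i, A i = w) ↔ _; simp [Fin.exists_fin_two, eq_comm]
  constructor
  · intro h
    by_cases h0 : A 0 = 0
    · exact ⟨![0, 1], A 1, by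
        intro i j
        fin_cases i
        · simp [h0]
        · simp⟩
    · have hle : span ℝ {A 0} ≤ span ℝ (Set.range A) :=
        span_mono (by rw [hrange]; simp)
      have h1 : finrank ℝ (span ℝ ({A 0} : Set (Fin 3 → ℝ))) = 1 :=
        finrank_span_singleton h0
      have heq : span ℝ ({A 0} : Set (Fin 3 → ℝ)) = span ℝ (Set.range A) :=
        Submodule.eq_of_le_of_finrank_le hle (by omega)
      have hmem : A 1 ∈ span ℝ ({A 0} : Set (Fin 3 → ℝ)) := by
        rw [heq]; exact subset_span ⟨1, rfl⟩
      obtain ⟨c, hc⟩ := mem_span_singleton.mp hmem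
      exact ⟨![1, c], A 0, by
        intro i j
        fin_cases i
        · simp
        · simp [← hc]⟩
  · rintro ⟨u, v, huv⟩
    have hle : span ℝ (Set.range A) ≤ span ℝ ({v} : Set (Fin 3 → ℝ)) := by
      rw [span_le]
      rintro w ⟨i, rfl⟩
      exact mem_span_singleton.mpr ⟨u i, by ext j; simp [huv]⟩
    calc finrank ℝ (span ℝ (Set.range A)) ≤ finrank ℝ (span ℝ ({v} : Set (Fin 3 → ℝ))) :=
          Submodule.finrank_mono hle
      _ ≤ 1 := by
          by_cases hv : v = 0
          · calc finrank ℝ (span ℝ ({v} : Set (Fin 3 → ℝ))) ≤ ({v} : Set (Fin 3 → ℝ)).toFinset.card := finrank_span_le_card _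
              _ ≤ 1 := by simp
          · rw [finrank_span_singleton hv]

noncomputable section

/-- The matrix `Q_{λ,μ}` cutting out the invariant torsion variety. -/
def Qlm (l1 l2 l3 l4 m1 m2 : ℝ) : Matrix (Fin 2) (Fin 3) ℝ :=
  !![-(2 / 3) * l2 + 1 / 2 * m1, -(1 / 3) * l3 + 1 / 2 * m2, l1;
     -(2 / 3) * l3 - 1 / 2 * m2, -l4, 1 / 3 * l2 + 1 / 2 * m1]

theorem stmt4 (l1 l2 l3 l4 m1 m2 : ℝ) :
    (Qlm l1 l2 l3 l4 m1 m2).rank ≤ 1 ↔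
      ∃ x1 x2 y1 y2 y3 : ℝ,
        l1 = x1 * y1 ∧ l2 = x1 * y2 + x2 * y1 ∧ l3 = x1 * y3 + x2 * y2 ∧ l4 = x2 * y3 ∧
          m1 = 2 / 3 * (2 * x2 * y1 - x1 * y2) ∧ m2 = 2 / 3 * (x2 * y2 - 2 * x1 * y3) := by
  rw [rank_le_one_iff_outer]
  constructor
  · rintro ⟨u, v, huv⟩
    have e00 := huv 0 0; have e01 := huv 0 1; have e02 := huv 0 2
    have e10 := huv 1 0; have e11 := huv 1 1; have e12 := huv 1 2
    simp only [Qlm, Matrix.cons_val', Matrix.cons_val_zero, Matrix.cons_val_one,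
      Matrix.head_cons, Matrix.empty_val', Matrix.cons_val_fin_one, Matrix.head_fin_const,
      Matrix.cons_val_two, Matrix.tail_cons,
      Matrix.of_apply] at e00 e01 e02 e10 e11 e12
    refine ⟨u 0, u 1, v 2, -v 0, -v 1, by linear_combination e02,
      by linear_combination e12 - e00, by linear_combination -e01 - e10,
      by linear_combination -e11, by linear_combination (4/3)*e12 + (2/3)*e00,
      by linear_combination (4/3)*e01 - (2/3)*e10⟩
  · rintro ⟨x1, x2, y1, y2, y3, h1, h2, h3, h4, h5, h6⟩
    refine ⟨![x1, x2], ![-y2, -y3, y1], ?_⟩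
    intro i j
    fin_cases i <;> fin_cases j <;>
      simp [Qlm, h1, h2, h3, h4, h5, h6] <;> ring
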